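/- Let (W, τ) be a probability space and let f : W → ℝ be a bounded measurable function. Define the probability measure μ* on W by dμ*/dτ = e^f / ∫ e^f dτ. Then KL(μ* ‖ τ) ≤ ∫ f dμ* − ∫ f dτ ≤ osc(f), where osc(f) := sup f − inf f. -/
import Mathlib


open MeasureTheory Real

noncomputable section

/-- Proposition: entropy bound for exponential tilts.
If `dμ*/dτ = e^f / ∫ e^f dτ`, then `KL(μ* ‖ τ) ≤ ∫ f dμ* − ∫ f dτ ≤ osc(f)`. -/
theorem stmt3 {W : Type*} [MeasurableSpace W] [Nonempty W]
    (τ : Measure W) [IsProbabilityMeasure τ]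
    (f : W → ℝ) (hf : Measurable f) (B : ℝ) (hB : ∀ w, |f w| ≤ B)
    (Z : ℝ) (hZ : Z = ∫ w, Real.exp (f w) ∂τ)
    (μstar : Measure W)
    (hμ : μstar = τ.withDensity fun w => ENNReal.ofReal (Real.exp (f w) / Z)) :
    -- `KL(μ* ‖ τ) = ∫ log (dμ*/dτ) dμ*` with density ratio `e^f / Z`
    (∫ w, Real.log (Real.exp (f w) / Z) ∂μstar ≤ (∫ w, f w ∂μstar) - ∫ w, f w ∂τ) ∧
      (∫ w, f w ∂μstar) - (∫ w, f w ∂τ) ≤ (⨆ w, f w) - ⨅ w, f w := by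
  -- basic integrability facts
  have hfτ : Integrable f τ :=
    (integrable_const B).mono' hf.aestronglyMeasurable (ae_of_all _ fun w => by
      simpa using hB w)
  have hexp : Integrable (fun w => Real.exp (f w)) τ :=
    (integrable_const (Real.exp B)).mono' (hf.exp).aestronglyMeasurable
      (ae_of_all _ fun w => by
        rw [Real.norm_eq_abs, abs_of_pos (exp_pos _)]
        exact exp_le_exp.2 ((abs_le.1 (hB w)).2))
  have hZpos : 0 < Z := hZ ▸ integral_exp_pos hexp
  -- μ* = τ.tilted f
  have htilt : μstar = τ.tilted f := by
    rw [hμ, Measure.tilted, hZ]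
  have hprob : IsProbabilityMeasure μstar := by
    rw [htilt]; exact isProbabilityMeasure_tilted hexp
  have hfμ : Integrable f μstar :=
    (integrable_const B).mono' hf.aestronglyMeasurable (ae_of_all _ fun w => by
      simpa using hB w)
  constructor
  · -- first inequality
    have hlog : ∀ w, Real.log (Real.exp (f w) / Z) = f w - Real.log Z := fun w => by
      rw [Real.log_div (exp_ne_zero _) (ne_of_gt hZpos), Real.log_exp]
    have heq : ∫ w, Real.log (Real.exp (f w) / Z) ∂μstar
        = (∫ w, f w ∂μstar) - Real.log Z := by
      simp_rw [hlog]
      rw [integral_sub hfμ (integrable_const _), integral_const]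
      simp
    rw [heq]
    have hjensen : Real.exp (∫ w, f w ∂τ) ≤ Z := by
      rw [hZ]
      exact convexOn_exp.map_integral_le continuous_exp.continuousOn isClosed_univ
        (ae_of_all _ fun _ => trivial) hfτ hexp
    have : ∫ w, f w ∂τ ≤ Real.log Z :=
      (Real.le_log_iff_exp_le hZpos).2 hjensen
    linarith
  · -- second inequality
    have hbdd : BddAbove (Set.range f) := ⟨B, by rintro _ ⟨w, rfl⟩; exact (abs_le.1 (hB w)).2⟩
    have hbdd' : BddBelow (Set.range f) := ⟨-B, by rintro _ ⟨w, rfl⟩; exact (abs_le.1 (hB w)).1⟩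
    have h1 : ∫ w, f w ∂μstar ≤ ⨆ w, f w := by
      calc ∫ w, f w ∂μstar ≤ ∫ _, (⨆ w, f w) ∂μstar :=
            integral_mono hfμ (integrable_const _) fun w => le_ciSup hbdd w
        _ = ⨆ w, f w := by simp [hprob.measure_univ]
    have h2 : (⨅ w, f w) ≤ ∫ w, f w ∂τ := by
      calc (⨅ w, f w) = ∫ _, (⨅ w, f w) ∂τ := by simp
        _ ≤ ∫ w, f w ∂τ := integral_mono (integrable_const _) hfτ fun w => ciInf_le hbdd' w
    linarith
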